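/- Suppose a decomposition G of λK_n into k colors can be enclosed in a 2-edge-connected r-factorization of μK_m with m > n. Then every vertex v and every color i satisfy d_{G(i)}(v) ≤ r; moreover G is r-admissible. -/

import Mathlib

variable {V : Type*} [Fintype V] [DecidableEq V]

/-- Degree of a vertex in a multigraph given by an edge-multiplicity function. -/
def deg (c : V → V → ℕ) (v : V) : ℕ := ∑ u, c v u

/-- Reachability in a multigraph given by an edge-multiplicity function. -/
def Reach (c : V → V → ℕ) (u w : V) : Prop :=
  Relation.ReflTransGen (fun a b => a ≠ b ∧ 0 < c a b) u w

/-- The connected component of `v`. -/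
def comp (c : V → V → ℕ) (v : V) : Set V := {u | Reach c v u}

/-- Remove one copy of the edge `ab`. -/
def removeOne (c : V → V → ℕ) (a b : V) : V → V → ℕ :=
  fun u w => if (u = a ∧ w = b) ∨ (u = b ∧ w = a) then c u w - 1 else c u w

/-- First admissibility condition: every vertex has degree at most `r`. -/
def DegCond (r : ℕ) (c : V → V → ℕ) : Prop := ∀ v, deg c v ≤ r

/-- Second admissibility condition: every connected component contains a vertex of degree at
most `r - 2`, or at least two vertices of degree at most `r - 1`. -/
def CompCond (r : ℕ) (c : V → V → ℕ) : Prop :=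
  ∀ v₀, (∃ v ∈ comp c v₀, deg c v ≤ r - 2) ∨
    ∃ v ∈ comp c v₀, ∃ w ∈ comp c v₀, v ≠ w ∧ deg c v ≤ r - 1 ∧ deg c w ≤ r - 1

/-- Third admissibility condition: for every cutedge `ab` of a component (an edge whose
removal makes `b` unreachable from `a`), each of the two resulting components contains a
vertex of degree at most `r - 1` (degrees taken in `c`). -/
def CutCond (r : ℕ) (c : V → V → ℕ) : Prop :=
  ∀ a b, 0 < c a b → ¬ Reach (removeOne c a b) a b →
    (∃ v ∈ comp (removeOne c a b) a, deg c v ≤ r - 1) ∧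
      ∃ v ∈ comp (removeOne c a b) b, deg c v ≤ r - 1

/-- A color class is `r`-admissible if it satisfies the three conditions of
Definition 1.2 of the paper. -/
def Admissible (r : ℕ) (c : V → V → ℕ) : Prop :=
  DegCond r c ∧ CompCond r c ∧ CutCond r c

open Finset

lemma reach_closed (c : V → V → ℕ) (T : Set V)
    (hT : ∀ x ∈ T, ∀ y, 0 < c x y → y ∈ T) {u v : V} (h : Reach c u v) (hu : u ∈ T) :
    v ∈ T := by
  induction h with
  | refl => exact hu
  | tail _ h2 ih => exact hT _ ih _ h2.2

lemma exists_cross (c : V → V → ℕ) (T : Set V) {u v : V} (h : Reach c u v)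
    (hu : u ∈ T) (hv : v ∉ T) : ∃ x ∈ T, ∃ y, y ∉ T ∧ 0 < c x y := by
  by_contra hc
  push_neg at hc
  refine hv (reach_closed c T (fun x hx y hy => ?_) h hu)
  by_contra hyT
  have := hc x hx y hyT
  omega

lemma cut_ge_two (c : V → V → ℕ)
    (hconn : ∀ u v, Reach c u v)
    (h2 : ∀ a b, 0 < c a b → ∀ u v, Reach (removeOne c a b) u v)
    (T : Finset V) {x₀ y₀ : V} (hx : x₀ ∈ T) (hy : y₀ ∉ T) :
    2 ≤ ∑ x ∈ T, ∑ y ∈ Tᶜ, c x y := by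
  obtain ⟨a, haT, b, hbT, hab⟩ :=
    exists_cross c (↑T) (hconn x₀ y₀) (by simpa using hx) (by simpa using hy)
  rw [Finset.mem_coe] at haT
  have hbT' : b ∉ T := by simpa using hbT
  rw [← Finset.sum_product']
  by_contra hlt
  push_neg at hlt
  have hmem : (a, b) ∈ T ×ˢ Tᶜ := Finset.mem_product.mpr ⟨haT, Finset.mem_compl.mpr hbT'⟩
  have h1 : c a b ≤ ∑ p ∈ T ×ˢ Tᶜ, c p.1 p.2 :=
    Finset.single_le_sum (f := fun p => c p.1 p.2) (fun _ _ => Nat.zero_le _) hmem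
  have hzero : ∀ p ∈ T ×ˢ Tᶜ, p ≠ (a, b) → c p.1 p.2 = 0 := by
    intro p hp hpne
    have he : ∑ q ∈ (T ×ˢ Tᶜ).erase p, c q.1 q.2 + c p.1 p.2 = ∑ q ∈ T ×ˢ Tᶜ, c q.1 q.2 :=
      Finset.sum_erase_add _ _ hp
    have h3 : c a b ≤ ∑ q ∈ (T ×ˢ Tᶜ).erase p, c q.1 q.2 :=
      Finset.single_le_sum (f := fun p => c p.1 p.2) (fun _ _ => Nat.zero_le _)
        (Finset.mem_erase.mpr ⟨Ne.symm hpne, hmem⟩)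
    omega
  obtain ⟨x, hxT, y, hyT, hpos⟩ :=
    exists_cross (removeOne c a b) (↑T) (h2 a b hab a b) (by simpa using haT)
      (by simpa using hbT)
  rw [Finset.mem_coe] at hxT
  have hyT' : y ∉ T := by simpa using hyT
  unfold removeOne at hpos
  by_cases hc1 : (x = a ∧ y = b) ∨ (x = b ∧ y = a)
  · rw [if_pos hc1] at hpos
    rcases hc1 with ⟨hx1, hy1⟩ | ⟨hx1, hy1⟩
    · subst hx1; subst hy1; omega
    · exact hbT' (hx1 ▸ hxT)
  · rw [if_neg hc1] at hpos
    have hne : (x, y) ≠ (a, b) := by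
      intro hEq
      exact hc1 (Or.inl ⟨congrArg Prod.fst hEq, congrArg Prod.snd hEq⟩)
    have := hzero (x, y) (Finset.mem_product.mpr ⟨hxT, Finset.mem_compl.mpr hyT'⟩) hne
    simp only at this
    omega

lemma key_ineq {n m : ℕ} (r : ℕ) (f : Fin n ↪ Fin m)
    (Hc : Fin m → Fin m → ℕ) (Gc : Fin n → Fin n → ℕ)
    (hHreg : ∀ v, deg Hc v = r)
    (hencl : ∀ u v, Gc u v ≤ Hc (f u) (f v))
    (S : Finset (Fin n)) :
    ∑ v ∈ S, deg Gc v + ∑ x ∈ S.image f, ∑ y ∈ (S.image f)ᶜ, Hc x y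
      ≤ r * S.card + ∑ v ∈ S, ∑ u ∈ Sᶜ, Gc v u := by
  have hinj : ∀ x ∈ S, ∀ y ∈ S, f x = f y → x = y := fun x _ y _ h => f.injective h
  have h1 : ∀ v ∈ S, deg Gc v + ∑ y ∈ (S.image f)ᶜ, Hc (f v) y ≤ r + ∑ u ∈ Sᶜ, Gc v u := by
    intro v hv
    have hd : ∑ u ∈ S, Gc v u + ∑ u ∈ Sᶜ, Gc v u = deg Gc v :=
      Finset.sum_add_sum_compl S _
    have h2 : ∑ u ∈ S, Gc v u ≤ ∑ y ∈ S.image f, Hc (f v) y := by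
      rw [Finset.sum_image hinj]
      exact Finset.sum_le_sum fun u _ => hencl v u
    have h3 : ∑ y ∈ S.image f, Hc (f v) y + ∑ y ∈ (S.image f)ᶜ, Hc (f v) y = r := by
      rw [Finset.sum_add_sum_compl]; exact hHreg (f v)
    omega
  calc ∑ v ∈ S, deg Gc v + ∑ x ∈ S.image f, ∑ y ∈ (S.image f)ᶜ, Hc x y
      = ∑ v ∈ S, (deg Gc v + ∑ y ∈ (S.image f)ᶜ, Hc (f v) y) := by
        rw [Finset.sum_add_distrib, Finset.sum_image hinj]
    _ ≤ ∑ v ∈ S, (r + ∑ u ∈ Sᶜ, Gc v u) := Finset.sum_le_sum h1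
    _ = r * S.card + ∑ v ∈ S, ∑ u ∈ Sᶜ, Gc v u := by
        rw [Finset.sum_add_distrib, Finset.sum_const, smul_eq_mul, mul_comm]

/-- Suppose a decomposition `G` of `λK_n` into `k` colors is enclosed (via an
embedding `f` of the `n` vertices into the `m` vertices, `m > n`) in a 2-edge-connected
`r`-factorization `H` of `μK_m`: each `H i` is spanning `r`-regular, connected, and remains
connected after removal of any single edge.  Then every vertex has degree at most `r` in
every color class of `G`, and moreover `G` is `r`-admissible. -/
theorem stmt14 (lam mu r k n m : ℕ) (hlam : 0 < lam) (hle : lam ≤ mu)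
    (hr : 2 ≤ r) (hnm : n < m)
    (f : Fin n ↪ Fin m)
    (H : Fin k → Fin m → Fin m → ℕ)
    (hHsymm : ∀ i u v, H i u v = H i v u) (hHloop : ∀ i v, H i v v = 0)
    (hHdecomp : ∀ u v, u ≠ v → ∑ i, H i u v = mu)
    (hHreg : ∀ i v, deg (H i) v = r)
    (hHconn : ∀ (i : Fin k) (u v : Fin m), Reach (H i) u v)
    (hH2ec : ∀ (i : Fin k) (a b : Fin m), 0 < H i a b →
      ∀ u v, Reach (removeOne (H i) a b) u v)
    (G : Fin k → Fin n → Fin n → ℕ)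
    (hGsymm : ∀ i u v, G i u v = G i v u) (hGloop : ∀ i v, G i v v = 0)
    (hGdecomp : ∀ u v, u ≠ v → ∑ i, G i u v = lam)
    (hencl : ∀ i u v, G i u v ≤ H i (f u) (f v)) :
    (∀ (i : Fin k) (v : Fin n), deg (G i) v ≤ r) ∧ ∀ i, Admissible r (G i) := by
  classical
  -- a vertex of `Fin m` outside the image of `f`
  have hout : ∃ y₀ : Fin m, ∀ v : Fin n, f v ≠ y₀ := by
    by_contra hcon
    push_neg at hcon
    have hsurj : Function.Surjective f := fun y => hcon y
    have := Fintype.card_le_of_surjective f hsurj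
    simp at this
    omega
  -- degree condition
  have hdeg : ∀ (i : Fin k) (v : Fin n), deg (G i) v ≤ r := by
    intro i v
    have h1 : deg (G i) v ≤ ∑ u : Fin n, H i (f v) (f u) :=
      Finset.sum_le_sum fun u _ => hencl i v u
    have h2 : ∑ u : Fin n, H i (f v) (f u)
        = ∑ y ∈ Finset.univ.image f, H i (f v) y :=
      (Finset.sum_image (fun x _ y _ h => f.injective h)).symm
    have h3 : ∑ y ∈ Finset.univ.image f, H i (f v) y ≤ ∑ y : Fin m, H i (f v) y :=
      Finset.sum_le_sum_of_subset (Finset.subset_univ _)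
    have h4 : ∑ y : Fin m, H i (f v) y = r := hHreg i (f v)
    omega
  refine ⟨hdeg, fun i => ⟨hdeg i, ?_, ?_⟩⟩
  · -- CompCond
    intro v₀
    set S : Finset (Fin n) := Finset.univ.filter (· ∈ comp (G i) v₀) with hS
    have hmemS : ∀ v, v ∈ S ↔ Reach (G i) v₀ v := by
      intro v
      rw [hS]
      simp only [Finset.mem_filter, Finset.mem_univ, true_and]
      exact Iff.rfl
    have hv₀S : v₀ ∈ S := (hmemS v₀).mpr Relation.ReflTransGen.refl
    have hGcut0 : ∑ v ∈ S, ∑ u ∈ Sᶜ, G i v u = 0 := by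
      apply Finset.sum_eq_zero; intro v hv
      apply Finset.sum_eq_zero; intro u hu
      rw [Finset.mem_compl] at hu
      by_contra hne
      have hpos : 0 < G i v u := Nat.pos_of_ne_zero hne
      have hvu : v ≠ u := by rintro rfl; rw [hGloop] at hpos; omega
      exact hu ((hmemS u).mpr (((hmemS v).mp hv).tail ⟨hvu, hpos⟩))
    have hHcut : 2 ≤ ∑ x ∈ S.image f, ∑ y ∈ (S.image f)ᶜ, H i x y := by
      obtain ⟨y₀, hy₀⟩ := hout
      exact cut_ge_two (H i) (hHconn i) (hH2ec i) _ (Finset.mem_image_of_mem f hv₀S)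
        (fun hmem => by
          obtain ⟨v, _, hv⟩ := Finset.mem_image.mp hmem
          exact hy₀ v hv)
    have hkey := key_ineq r f (H i) (G i) (hHreg i) (hencl i) S
    rw [hGcut0] at hkey
    by_cases hcase : ∃ v ∈ S, deg (G i) v ≤ r - 2
    · obtain ⟨v, hv, hd⟩ := hcase
      exact Or.inl ⟨v, (hmemS v).mp hv, hd⟩
    · push_neg at hcase
      right
      set P := S.filter (fun v => deg (G i) v ≤ r - 1) with hP
      have hpt : ∀ v ∈ S, r ≤ deg (G i) v + (if v ∈ P then 1 else 0) := by
        intro v hv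
        have h1 := hcase v hv
        by_cases hvP : v ∈ P
        · rw [if_pos hvP]; omega
        · rw [if_neg hvP]
          have : ¬ deg (G i) v ≤ r - 1 := fun h => hvP (Finset.mem_filter.mpr ⟨hv, h⟩)
          omega
      have hsum := Finset.sum_le_sum hpt
      rw [Finset.sum_add_distrib, Finset.sum_const, smul_eq_mul] at hsum
      have hcf : ∑ v ∈ S, (if v ∈ P then 1 else 0) = P.card := by
        rw [hP, Finset.card_filter]
        refine Finset.sum_congr rfl fun v hv => ?_
        exact if_congr (by simp [hP, Finset.mem_filter, hv]) rfl rfl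
      rw [hcf] at hsum
      have hcard : 2 ≤ P.card := by
        have hmul : S.card * r = r * S.card := Nat.mul_comm _ _
        omega
      obtain ⟨v, hvP, w, hwP, hvw⟩ := Finset.one_lt_card.mp hcard
      rw [hP, Finset.mem_filter] at hvP hwP
      exact ⟨v, (hmemS v).mp hvP.1, w, (hmemS w).mp hwP.1, hvw, hvP.2, hwP.2⟩
  · -- CutCond
    intro a b hab hnr
    set c' : Fin n → Fin n → ℕ := removeOne (G i) a b with hc'
    have hne : a ≠ b := by
      rintro rfl; rw [hGloop] at hab; omega
    have hc'ab : c' a b = G i a b - 1 := by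
      rw [hc']; unfold removeOne; rw [if_pos (Or.inl ⟨rfl, rfl⟩)]
    have hab1 : G i a b = 1 := by
      by_contra h
      have : 0 < c' a b := by omega
      exact hnr (Relation.ReflTransGen.single ⟨hne, this⟩)
    have hc'symm : ∀ u w, c' u w = c' w u := by
      intro u w
      rw [hc']; unfold removeOne
      rw [hGsymm i u w]
      exact if_congr (by tauto) rfl rfl
    have hsymrel : Symmetric (fun x y => x ≠ y ∧ 0 < c' x y) := by
      intro x y ⟨h1, h2⟩
      exact ⟨h1.symm, by rw [hc'symm]; exact h2⟩
    have hnrb : ¬ Reach c' b a := fun h =>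
      hnr (by
        haveI : Std.Symm (fun x y => x ≠ y ∧ 0 < c' x y) := ⟨fun _ _ h' => hsymrel h'⟩
        exact Std.Symm.symm (r := Relation.ReflTransGen (fun x y => x ≠ y ∧ 0 < c' x y)) _ _ h)
    have hloop' : ∀ v, c' v v = 0 := by
      intro v
      have h1 : c' v v ≤ G i v v := by
        rw [hc']; unfold removeOne; split <;> omega
      rw [hGloop] at h1; omega
    -- generic side argument
    have side : ∀ x y : Fin n, x ≠ y → G i x y = 1 → ¬ Reach c' x y →
        ((x = a ∧ y = b) ∨ (x = b ∧ y = a)) →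
        ∃ v ∈ comp c' x, deg (G i) v ≤ r - 1 := by
      intro x y hxy hxy1 hnrxy hor
      set A : Finset (Fin n) := Finset.univ.filter (· ∈ comp c' x) with hA
      have hmemA : ∀ v, v ∈ A ↔ Reach c' x v := by
        intro v
        rw [hA]
        simp only [Finset.mem_filter, Finset.mem_univ, true_and]
        exact Iff.rfl
      have hxA : x ∈ A := (hmemA x).mpr Relation.ReflTransGen.refl
      have hyA : y ∉ A := fun h => hnrxy ((hmemA y).mp h)
      -- crossing edges of G from A: only the single edge (x, y)
      have hGcut : ∑ v ∈ A, ∑ u ∈ Aᶜ, G i v u ≤ 1 := by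
        rw [← Finset.sum_product']
        have hmem : (x, y) ∈ A ×ˢ Aᶜ :=
          Finset.mem_product.mpr ⟨hxA, Finset.mem_compl.mpr hyA⟩
        have heq : ∑ p ∈ A ×ˢ Aᶜ, G i p.1 p.2 = G i x y := by
          apply Finset.sum_eq_single_of_mem _ hmem
          intro p hp hpne
          obtain ⟨hpA, hpAc⟩ := Finset.mem_product.mp hp
          rw [Finset.mem_compl] at hpAc
          have hc'0 : c' p.1 p.2 = 0 := by
            by_contra hpos
            have hp12 : p.1 ≠ p.2 := by
              rintro hE
              rw [hE] at hpA
              exact hpAc hpA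
            exact hpAc ((hmemA p.2).mpr
              (((hmemA p.1).mp hpA).tail ⟨hp12, Nat.pos_of_ne_zero hpos⟩))
          have hnc : ¬ ((p.1 = a ∧ p.2 = b) ∨ (p.1 = b ∧ p.2 = a)) := by
            rintro (⟨h1, h2⟩ | ⟨h1, h2⟩) <;>
              rcases hor with ⟨hx1, hy1⟩ | ⟨hx1, hy1⟩
            · exact hpne (Prod.ext (h1.trans hx1.symm) (h2.trans hy1.symm))
            · exact hpAc (by rw [h2.trans hx1.symm]; exact hxA)
            · exact hpAc (by rw [h2.trans hx1.symm]; exact hxA)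
            · exact hpne (Prod.ext (h1.trans hx1.symm) (h2.trans hy1.symm))
          have : c' p.1 p.2 = G i p.1 p.2 := by
            rw [hc']; unfold removeOne; rw [if_neg hnc]
          omega
        omega
      have hHcut : 2 ≤ ∑ u ∈ A.image f, ∑ y' ∈ (A.image f)ᶜ, H i u y' := by
        obtain ⟨y₀, hy₀⟩ := hout
        exact cut_ge_two (H i) (hHconn i) (hH2ec i) _ (Finset.mem_image_of_mem f hxA)
          (fun hmem' => by
            obtain ⟨v, _, hv⟩ := Finset.mem_image.mp hmem'
            exact hy₀ v hv)
      have hkey := key_ineq r f (H i) (G i) (hHreg i) (hencl i) A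
      by_contra hno
      push_neg at hno
      have hall : ∀ v ∈ A, deg (G i) v = r := by
        intro v hv
        have h1 := hno v ((hmemA v).mp hv)
        have h2 := hdeg i v
        omega
      have hsumr : ∑ v ∈ A, deg (G i) v = r * A.card := by
        rw [Finset.sum_congr rfl hall, Finset.sum_const, smul_eq_mul, mul_comm]
      omega
    constructor
    · exact side a b hne hab1 hnr (Or.inl ⟨rfl, rfl⟩)
    · exact side b a hne.symm (by rw [hGsymm]; exact hab1) hnrb (Or.inr ⟨rfl, rfl⟩)
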